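/- For p ≥ q ≥ 1 integers, the L²(ℝ²) distance between the Persistence Weighted Gaussian images (with weight ω(x,y) = (y−x)² and bandwidth σ) of the diagrams Dg_q = {p_1,…,p_q} and Dg_p = {p_1,…,p_p}, where p_k = (k, k+1/k), satisfies ‖Φ_PWG(Dg_p) − Φ_PWG(Dg_q)‖²_{L²} ≤ π σ² (Σ_{k=q+1}^{p} 1/k²)². Consequently, the sequence (Φ_PWG(Dg_n))_{n≥1} is Cauchy in L²(ℝ²). -/

import Mathlib

open MeasureTheory
open scoped ENNReal

noncomputable section

/-- The Persistence Weighted Gaussian image of the diagram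
`Dg_n = {p_1, …, p_n}`, `p_k = (k, k + 1/k)`, with weight `ω(x,y) = (y-x)²`
(so `ω(p_k) = 1/k²`) and bandwidth `σ`, as a function on `ℝ²`. -/
def PWG (n : ℕ) (σ : ℝ) : ℝ × ℝ → ℝ := fun x =>
  ∑ k ∈ Finset.Icc 1 n, (1 / (k : ℝ) ^ 2) *
    Real.exp (-((x.1 - (k : ℝ)) ^ 2 + (x.2 - ((k : ℝ) + 1 / (k : ℝ))) ^ 2) / (2 * σ ^ 2))

namespace PWGaux

/-- 1D double-Gaussian. -/
def F (σ a b t : ℝ) : ℝ := Real.exp (-((t - a) ^ 2 + (t - b) ^ 2) / (2 * σ ^ 2))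

lemma F_pt {σ : ℝ} (hσ : 0 < σ) (a b t : ℝ) :
    F σ a b t = Real.exp (-((a - b) ^ 2) / (4 * σ ^ 2)) *
      Real.exp (-(σ ^ 2)⁻¹ * (t - (a + b) / 2) ^ 2) := by
  unfold F
  rw [← Real.exp_add]
  congr 1
  have h : (σ : ℝ) ^ 2 ≠ 0 := by positivity
  field_simp
  ring

lemma F_integrable {σ : ℝ} (hσ : 0 < σ) (a b : ℝ) : Integrable (F σ a b) := by
  have h1 : Integrable (fun t : ℝ => Real.exp (-(σ ^ 2)⁻¹ * t ^ 2)) :=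
    integrable_exp_neg_mul_sq (by positivity)
  have h2 := (h1.comp_sub_right ((a + b) / 2)).const_mul
    (Real.exp (-((a - b) ^ 2) / (4 * σ ^ 2)))
  exact h2.congr (Filter.Eventually.of_forall fun t => (F_pt hσ a b t).symm)

lemma F_integral {σ : ℝ} (hσ : 0 < σ) (a b : ℝ) :
    ∫ t : ℝ, F σ a b t =
      Real.sqrt Real.pi * σ * Real.exp (-((a - b) ^ 2) / (4 * σ ^ 2)) := by
  simp_rw [F_pt hσ a b]
  rw [integral_const_mul]
  rw [integral_sub_right_eq_self (fun t : ℝ => Real.exp (-(σ ^ 2)⁻¹ * t ^ 2)) ((a + b) / 2)]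
  rw [integral_gaussian]
  have h : Real.pi / (σ ^ 2)⁻¹ = Real.pi * σ ^ 2 := by field_simp
  rw [h, Real.sqrt_mul Real.pi_pos.le, Real.sqrt_sq hσ.le]
  ring

lemma G2_integrable {σ : ℝ} (hσ : 0 < σ) (a b c d : ℝ) :
    Integrable (fun x : ℝ × ℝ => F σ a b x.1 * F σ c d x.2) := by
  rw [MeasureTheory.Measure.volume_eq_prod ℝ ℝ]
  exact (F_integrable hσ a b).mul_prod (F_integrable hσ c d)

lemma G2_integral_le {σ : ℝ} (hσ : 0 < σ) (a b c d : ℝ) :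
    ∫ x : ℝ × ℝ, F σ a b x.1 * F σ c d x.2 ≤ Real.pi * σ ^ 2 := by
  rw [MeasureTheory.Measure.volume_eq_prod ℝ ℝ, integral_prod_mul, F_integral hσ, F_integral hσ]
  have e1 : Real.exp (-((a - b) ^ 2) / (4 * σ ^ 2)) ≤ 1 := by
    rw [Real.exp_le_one_iff, neg_div, neg_nonpos]
    positivity
  have e2 : Real.exp (-((c - d) ^ 2) / (4 * σ ^ 2)) ≤ 1 := by
    rw [Real.exp_le_one_iff, neg_div, neg_nonpos]
    positivity
  have hsq : Real.sqrt Real.pi ^ 2 = Real.pi := Real.sq_sqrt Real.pi_pos.le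
  have hp1 : (0:ℝ) < Real.exp (-((a - b) ^ 2) / (4 * σ ^ 2)) := Real.exp_pos _
  have hp2 : (0:ℝ) < Real.exp (-((c - d) ^ 2) / (4 * σ ^ 2)) := Real.exp_pos _
  calc Real.sqrt Real.pi * σ * Real.exp (-((a - b) ^ 2) / (4 * σ ^ 2)) *
        (Real.sqrt Real.pi * σ * Real.exp (-((c - d) ^ 2) / (4 * σ ^ 2)))
      = Real.sqrt Real.pi ^ 2 * σ ^ 2 * (Real.exp (-((a - b) ^ 2) / (4 * σ ^ 2)) *
          Real.exp (-((c - d) ^ 2) / (4 * σ ^ 2))) := by ring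
    _ = (Real.pi * σ ^ 2) * (Real.exp (-((a - b) ^ 2) / (4 * σ ^ 2)) *
          Real.exp (-((c - d) ^ 2) / (4 * σ ^ 2))) := by rw [hsq]
    _ ≤ (Real.pi * σ ^ 2) * 1 := by
        have h0 : (0:ℝ) ≤ Real.pi * σ ^ 2 := by positivity
        exact mul_le_mul_of_nonneg_left (mul_le_one₀ e1 hp2.le e2) h0
    _ = Real.pi * σ ^ 2 := mul_one _

lemma tail_le (q : ℕ) (hq : 1 ≤ q) :
    ∀ p : ℕ, q ≤ p → ∑ k ∈ Finset.Icc (q + 1) p, 1 / (k : ℝ) ^ 2 ≤ 1 / (q:ℝ) - 1 / (p:ℝ) := by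
  intro p hp
  induction p, hp using Nat.le_induction with
  | base => simp [Finset.Icc_eq_empty_of_lt (Nat.lt_succ_self q)]
  | succ p hp ih =>
    rw [Finset.sum_Icc_succ_top (by omega)]
    have hq' : (1:ℝ) ≤ (q:ℝ) := by exact_mod_cast hq
    have hpq : (q:ℝ) ≤ (p:ℝ) := by exact_mod_cast hp
    have hp0 : (0:ℝ) < (p:ℝ) := by linarith
    have hp1 : (0:ℝ) < ((p:ℕ) + 1 : ℝ) := by linarith
    have key : 1 / ((p:ℝ) + 1) ^ 2 ≤ 1 / (p:ℝ) - 1 / ((p:ℝ) + 1) := by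
      rw [div_sub_div _ _ (ne_of_gt hp0) (ne_of_gt hp1)]
      rw [div_le_div_iff₀ (by positivity) (by positivity)]
      ring_nf
      nlinarith
    push_cast
    linarith

/-- The 2D Gaussian bump at `p_k`. -/
def G (σ : ℝ) (k : ℕ) (x : ℝ × ℝ) : ℝ :=
  Real.exp (-((x.1 - (k : ℝ)) ^ 2 + (x.2 - ((k : ℝ) + 1 / (k : ℝ))) ^ 2) / (2 * σ ^ 2))

lemma GG_eq (σ : ℝ) (k l : ℕ) (x : ℝ × ℝ) :
    G σ k x * G σ l x =
      F σ (k : ℝ) (l : ℝ) x.1 * F σ ((k : ℝ) + 1 / (k : ℝ)) ((l : ℝ) + 1 / (l : ℝ)) x.2 := by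
  simp only [G, F]
  rw [← Real.exp_add, ← Real.exp_add]
  congr 1
  ring

lemma GG_integrable {σ : ℝ} (hσ : 0 < σ) (k l : ℕ) :
    Integrable (fun x : ℝ × ℝ => G σ k x * G σ l x) :=
  (G2_integrable hσ _ _ _ _).congr (Filter.Eventually.of_forall fun x => (GG_eq σ k l x).symm)

lemma GG_integral_le {σ : ℝ} (hσ : 0 < σ) (k l : ℕ) :
    ∫ x : ℝ × ℝ, G σ k x * G σ l x ≤ Real.pi * σ ^ 2 := by
  have : ∀ x : ℝ × ℝ, G σ k x * G σ l x =
      F σ (k : ℝ) (l : ℝ) x.1 * F σ ((k : ℝ) + 1 / (k : ℝ)) ((l : ℝ) + 1 / (l : ℝ)) x.2 :=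
    GG_eq σ k l
  simp only [this]
  exact G2_integral_le hσ _ _ _ _

lemma diff_eq {σ : ℝ} {p q : ℕ} (hqp : q ≤ p) (x : ℝ × ℝ) :
    PWG p σ x - PWG q σ x =
      ∑ k ∈ Finset.Icc (q + 1) p, (1 / (k : ℝ) ^ 2) * G σ k x := by
  have hsub : Finset.Icc 1 q ⊆ Finset.Icc 1 p := by
    intro k hk
    simp only [Finset.mem_Icc] at hk ⊢
    omega
  have hdiff : Finset.Icc 1 p \ Finset.Icc 1 q = Finset.Icc (q + 1) p := by
    ext k
    simp only [Finset.mem_sdiff, Finset.mem_Icc]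
    omega
  have h := Finset.sum_sdiff_eq_sub (f := fun k : ℕ => (1 / (k : ℝ) ^ 2) * G σ k x) hsub
  rw [hdiff] at h
  simp only [PWG, G] at h ⊢
  linarith [h]

lemma sq_diff_eq {σ : ℝ} {p q : ℕ} (hqp : q ≤ p) (x : ℝ × ℝ) :
    (PWG p σ x - PWG q σ x) ^ 2 =
      ∑ k ∈ Finset.Icc (q + 1) p, ∑ l ∈ Finset.Icc (q + 1) p,
        (1 / (k : ℝ) ^ 2 * (1 / (l : ℝ) ^ 2)) * (G σ k x * G σ l x) := by
  rw [diff_eq hqp, sq, Finset.sum_mul_sum]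
  exact Finset.sum_congr rfl fun k _ => Finset.sum_congr rfl fun l _ => by ring

lemma sq_diff_integrable {σ : ℝ} (hσ : 0 < σ) {p q : ℕ} (hqp : q ≤ p) :
    Integrable (fun x : ℝ × ℝ => (PWG p σ x - PWG q σ x) ^ 2) := by
  have : Integrable (fun x : ℝ × ℝ => ∑ k ∈ Finset.Icc (q + 1) p,
      ∑ l ∈ Finset.Icc (q + 1) p,
        (1 / (k : ℝ) ^ 2 * (1 / (l : ℝ) ^ 2)) * (G σ k x * G σ l x)) :=
    integrable_finset_sum _ fun k _ => integrable_finset_sum _ fun l _ =>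
      (GG_integrable hσ k l).const_mul _
  exact this.congr (Filter.Eventually.of_forall fun x => (sq_diff_eq hqp x).symm)

lemma sq_diff_integral_le {σ : ℝ} (hσ : 0 < σ) {p q : ℕ} (hqp : q ≤ p) :
    (∫ x : ℝ × ℝ, (PWG p σ x - PWG q σ x) ^ 2) ≤
      Real.pi * σ ^ 2 * (∑ k ∈ Finset.Icc (q + 1) p, 1 / (k : ℝ) ^ 2) ^ 2 := by
  set S := Finset.Icc (q + 1) p with hS
  have hval : (∫ x : ℝ × ℝ, (PWG p σ x - PWG q σ x) ^ 2) =
      ∑ k ∈ S, ∑ l ∈ S, (1 / (k : ℝ) ^ 2 * (1 / (l : ℝ) ^ 2)) *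
        ∫ x : ℝ × ℝ, G σ k x * G σ l x := by
    have h1 : ∀ x : ℝ × ℝ, (PWG p σ x - PWG q σ x) ^ 2 =
        ∑ k ∈ S, ∑ l ∈ S,
          (1 / (k : ℝ) ^ 2 * (1 / (l : ℝ) ^ 2)) * (G σ k x * G σ l x) := sq_diff_eq hqp
    simp only [h1]
    rw [integral_finset_sum _ (fun k _ => integrable_finset_sum _ fun l _ =>
      (GG_integrable hσ k l).const_mul _)]
    refine Finset.sum_congr rfl fun k _ => ?_
    rw [integral_finset_sum _ (fun l _ => (GG_integrable hσ k l).const_mul _)]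
    exact Finset.sum_congr rfl fun l _ => integral_const_mul _ _
  rw [hval]
  have hbound : ∑ k ∈ S, ∑ l ∈ S, (1 / (k : ℝ) ^ 2 * (1 / (l : ℝ) ^ 2)) *
      (∫ x : ℝ × ℝ, G σ k x * G σ l x) ≤
      ∑ k ∈ S, ∑ l ∈ S, (1 / (k : ℝ) ^ 2 * (1 / (l : ℝ) ^ 2)) * (Real.pi * σ ^ 2) :=
    Finset.sum_le_sum fun k _ => Finset.sum_le_sum fun l _ =>
      mul_le_mul_of_nonneg_left (GG_integral_le hσ k l) (by positivity)
  refine hbound.trans (le_of_eq ?_)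
  have hsq2 : (∑ k ∈ S, 1 / (k : ℝ) ^ 2) ^ 2 =
      ∑ k ∈ S, ∑ l ∈ S, 1 / (k : ℝ) ^ 2 * (1 / (l : ℝ) ^ 2) := by
    rw [sq, Finset.sum_mul_sum]
  rw [hsq2, Finset.mul_sum]
  refine Finset.sum_congr rfl fun k _ => ?_
  rw [Finset.mul_sum]
  exact Finset.sum_congr rfl fun l _ => by ring

lemma continuous_PWG (n : ℕ) (σ : ℝ) : Continuous (PWG n σ) := by
  unfold PWG
  refine continuous_finset_sum _ fun k _ => Continuous.mul continuous_const ?_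
  exact Real.continuous_exp.comp (by fun_prop)

lemma eLpNorm_lt {f : ℝ × ℝ → ℝ} (hm : AEStronglyMeasurable f (volume : Measure (ℝ × ℝ)))
    (hint : Integrable (fun x => f x ^ 2) (volume : Measure (ℝ × ℝ)))
    {C ε : ℝ} (hC : (∫ x, f x ^ 2) ≤ C) (hCε : C < ε ^ 2) (hε : 0 < ε) :
    eLpNorm f 2 (volume : Measure (ℝ × ℝ)) < ENNReal.ofReal ε := by
  rw [eLpNorm_eq_lintegral_rpow_enorm_toReal (by norm_num) (by norm_num)]
  have htoReal : (2 : ℝ≥0∞).toReal = (2 : ℝ) := by norm_num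
  rw [htoReal]
  have hpt : ∀ x : ℝ × ℝ, (‖f x‖ₑ) ^ (2 : ℝ) = ENNReal.ofReal (f x ^ 2) := by
    intro x
    rw [Real.enorm_eq_ofReal_abs, show (2:ℝ) = ((2:ℕ):ℝ) by norm_num,
      ENNReal.rpow_natCast, ← ENNReal.ofReal_pow (abs_nonneg _), sq_abs]
  simp only [hpt]
  rw [← MeasureTheory.ofReal_integral_eq_lintegral_ofReal hint
    (Filter.Eventually.of_forall fun x => sq_nonneg (f x))]
  have h1 : ENNReal.ofReal (∫ x, f x ^ 2) < ENNReal.ofReal (ε ^ 2) :=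
    (ENNReal.ofReal_lt_ofReal_iff (by positivity)).mpr (lt_of_le_of_lt hC hCε)
  have h2 : (ENNReal.ofReal (ε ^ 2)) ^ ((1:ℝ)/2) = ENNReal.ofReal ε := by
    rw [ENNReal.ofReal_rpow_of_nonneg (by positivity) (by norm_num)]
    congr 1
    rw [← Real.rpow_natCast ε 2, ← Real.rpow_mul hε.le]
    norm_num
  calc (ENNReal.ofReal (∫ x, f x ^ 2)) ^ ((1:ℝ)/2)
      < (ENNReal.ofReal (ε ^ 2)) ^ ((1:ℝ)/2) := ENNReal.rpow_lt_rpow h1 (by norm_num)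
    _ = ENNReal.ofReal ε := h2

end PWGaux

/-- For integers `p ≥ q ≥ 1`, the `L²(ℝ²)` distance between the Persistence Weighted
Gaussian images of `Dg_p` and `Dg_q` satisfies
`‖Φ(Dg_p) − Φ(Dg_q)‖² ≤ π σ² (Σ_{k=q+1}^p 1/k²)²`; consequently the sequence
`(Φ(Dg_n))` is Cauchy in `L²(ℝ²)`. -/
theorem pwg_L2_bound_and_cauchy (σ : ℝ) (hσ : 0 < σ) :
    (∀ p q : ℕ, 1 ≤ q → q ≤ p →
      (∫ x : ℝ × ℝ, (PWG p σ x - PWG q σ x) ^ 2) ≤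
        Real.pi * σ ^ 2 * (∑ k ∈ Finset.Icc (q + 1) p, 1 / (k : ℝ) ^ 2) ^ 2) ∧
    ∀ ε : ℝ, 0 < ε → ∃ N : ℕ, ∀ m ≥ N, ∀ n ≥ N,
      eLpNorm (fun x => PWG m σ x - PWG n σ x) 2 (volume : Measure (ℝ × ℝ)) <
        ENNReal.ofReal ε := by
  constructor
  · intro p q hq hqp
    exact PWGaux.sq_diff_integral_le hσ hqp
  · intro ε hε
    obtain ⟨N0, hN0⟩ := exists_nat_gt (Real.sqrt Real.pi * σ / ε)
    refine ⟨N0 + 1, ?_⟩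
    have hN1 : (1:ℕ) ≤ N0 + 1 := by omega
    have hNpos : (0:ℝ) < ((N0 + 1 : ℕ) : ℝ) := by positivity
    have hNε : Real.sqrt Real.pi * σ * (1 / ((N0 + 1 : ℕ) : ℝ)) < ε := by
      rw [div_lt_iff₀ hε] at hN0
      rw [mul_one_div, div_lt_iff₀ hNpos]
      push_cast at hN0 ⊢
      nlinarith [Real.sqrt_nonneg Real.pi, hσ, hε]
    have key : ∀ p q : ℕ, N0 + 1 ≤ q → q ≤ p →
        eLpNorm (fun x => PWG p σ x - PWG q σ x) 2 (volume : Measure (ℝ × ℝ)) <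
          ENNReal.ofReal ε := by
      intro p q hNq hqp
      have hq1 : 1 ≤ q := le_trans hN1 hNq
      set T := ∑ k ∈ Finset.Icc (q + 1) p, 1 / (k : ℝ) ^ 2 with hT
      have hT0 : 0 ≤ T := Finset.sum_nonneg fun k _ => by positivity
      have hq0 : (0:ℝ) < (q : ℝ) := by exact_mod_cast Nat.lt_of_lt_of_le Nat.zero_lt_one hq1
      have hp0 : (0:ℝ) < (p : ℝ) := by
        have : 0 < p := by omega
        exact_mod_cast this
      have hTle : T ≤ 1 / ((N0 + 1 : ℕ) : ℝ) := by
        have h1 := PWGaux.tail_le q hq1 p hqp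
        have h2 : 0 < 1 / (p : ℝ) := by positivity
        have h3 : 1 / (q : ℝ) ≤ 1 / ((N0 + 1 : ℕ) : ℝ) := by
          apply one_div_le_one_div_of_le hNpos
          exact_mod_cast hNq
        linarith
      have hCε : Real.pi * σ ^ 2 * T ^ 2 < ε ^ 2 := by
        have hsq : Real.sqrt Real.pi ^ 2 = Real.pi := Real.sq_sqrt Real.pi_pos.le
        have hA : Real.sqrt Real.pi * σ * T ≤ Real.sqrt Real.pi * σ * (1 / ((N0 + 1 : ℕ) : ℝ)) :=
          mul_le_mul_of_nonneg_left hTle (by positivity)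
        have hB : Real.sqrt Real.pi * σ * T < ε := lt_of_le_of_lt hA hNε
        have hB0 : 0 ≤ Real.sqrt Real.pi * σ * T := by positivity
        have heq2 : (Real.sqrt Real.pi * σ * T) ^ 2 = Real.pi * σ ^ 2 * T ^ 2 := by
          rw [mul_pow, mul_pow, hsq]
        rw [← heq2]
        exact pow_lt_pow_left₀ hB hB0 (by norm_num)
      exact PWGaux.eLpNorm_lt
        (((PWGaux.continuous_PWG p σ).sub (PWGaux.continuous_PWG q σ)).aestronglyMeasurable)
        (PWGaux.sq_diff_integrable hσ hqp) (PWGaux.sq_diff_integral_le hσ hqp) hCε hε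
    intro m hm n hn
    rcases le_total n m with h | h
    · exact key m n hn h
    · have heq : (fun x => PWG m σ x - PWG n σ x) = -(fun x => PWG n σ x - PWG m σ x) := by
        funext x; simp
      rw [heq, eLpNorm_neg]
      exact key n m hm h

end
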